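/- Let a, f₂, l₁, l₂, m₁, b₁ : [0,T] → ℝ be continuous and bounded with l₁, l₂ ≥ 0, m₁ > 0, and r₁, r₂ ≥ 0. Then the scalar Riccati equation α'(t) = (b₁(t)²/m₁(t))α(t)² + (2a(t)+f₂(t)²)α(t) - (l₁(t)+l₂(t)), α(0) = -(r₁+r₂), has a unique solution on [0,T], and this solution satisfies α(t) ≤ 0 for all t ∈ [0,T]. -/

import Mathlib

open Set

/-- If the derivative is nonpositive whenever the function is positive, and the initial
value is nonpositive, the function stays nonpositive. -/
lemma riccati_aux_nonpos {T : ℝ} {α φ : ℝ → ℝ}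
    (hd : ∀ t ∈ Icc (0:ℝ) T, HasDerivAt α (φ t) t)
    (h0 : α 0 ≤ 0)
    (hφ : ∀ t ∈ Icc (0:ℝ) T, 0 < α t → φ t ≤ 0) :
    ∀ t ∈ Icc (0:ℝ) T, α t ≤ 0 := by
  intro t₁ ht₁
  by_contra hcon
  push_neg at hcon
  have hcontOn : ContinuousOn α (Icc 0 T) := fun s hs =>
    ((hd s hs).continuousAt).continuousWithinAt
  have hsub : Icc (0:ℝ) t₁ ⊆ Icc 0 T := Icc_subset_Icc le_rfl ht₁.2
  set S : Set ℝ := Icc 0 t₁ ∩ α ⁻¹' (Iic 0) with hS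
  have hScl : IsClosed S :=
    (hcontOn.mono hsub).preimage_isClosed_of_isClosed isClosed_Icc isClosed_Iic
  have h0mem : (0:ℝ) ∈ S := ⟨⟨le_rfl, ht₁.1⟩, h0⟩
  have hSne : S.Nonempty := ⟨0, h0mem⟩
  have hSbdd : BddAbove S := ⟨t₁, fun s hs => hs.1.2⟩
  set t₀ := sSup S with ht₀def
  have ht₀S : t₀ ∈ S := hScl.csSup_mem hSne hSbdd
  have ht₀1 : t₀ ≤ t₁ := ht₀S.1.2
  have ht₀0 : 0 ≤ t₀ := ht₀S.1.1
  have ht₀lt : t₀ < t₁ := lt_of_le_of_ne ht₀1 (by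
    intro h
    have := ht₀S.2
    rw [h] at this
    exact absurd hcon (not_lt.mpr this))
  have hpos : ∀ s ∈ Ioc t₀ t₁, 0 < α s := by
    intro s hs
    by_contra hns
    push_neg at hns
    have : s ∈ S := ⟨⟨ht₀0.trans hs.1.le, hs.2⟩, hns⟩
    exact absurd (le_csSup hSbdd this) (not_le.mpr hs.1)
  have hsub2 : Icc t₀ t₁ ⊆ Icc 0 T := Icc_subset_Icc ht₀0 ht₁.2
  have hanti : AntitoneOn α (Icc t₀ t₁) := by
    apply antitoneOn_of_deriv_nonpos (convex_Icc _ _) (hcontOn.mono hsub2)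
    · intro x hx
      rw [interior_Icc] at hx
      exact ((hd x (hsub2 (Ioo_subset_Icc_self hx))).differentiableAt).differentiableWithinAt
    · intro x hx
      rw [interior_Icc] at hx
      have hx' : x ∈ Icc (0:ℝ) T := hsub2 (Ioo_subset_Icc_self hx)
      rw [(hd x hx').deriv]
      exact hφ x hx' (hpos x ⟨hx.1, hx.2.le⟩)
  have : α t₁ ≤ α t₀ :=
    hanti (left_mem_Icc.mpr ht₀1) (right_mem_Icc.mpr ht₀1) ht₀1
  exact absurd hcon (not_lt.mpr (this.trans ht₀S.2))

/-- A function with derivative bounded above by `L` on `[0,T]` grows at most linearly. -/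
lemma riccati_aux_linear {T L : ℝ} {ψ φ : ℝ → ℝ}
    (hd : ∀ t ∈ Icc (0:ℝ) T, HasDerivAt ψ (φ t) t)
    (hφ : ∀ t ∈ Icc (0:ℝ) T, φ t ≤ L) :
    ∀ t ∈ Icc (0:ℝ) T, ψ t ≤ ψ 0 + L * t := by
  intro t ht
  have hcontOn : ContinuousOn (fun s => ψ s - L * s) (Icc 0 T) := fun s hs =>
    (((hd s hs).continuousAt).sub ((continuous_const.mul continuous_id).continuousAt)).continuousWithinAt
  have hanti : AntitoneOn (fun s => ψ s - L * s) (Icc 0 T) := by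
    apply antitoneOn_of_deriv_nonpos (convex_Icc _ _) hcontOn
    · intro x hx
      rw [interior_Icc] at hx
      have hx' : x ∈ Icc (0:ℝ) T := Ioo_subset_Icc_self hx
      exact (((hd x hx').sub (((hasDerivAt_id x).const_mul L))).differentiableAt).differentiableWithinAt
    · intro x hx
      rw [interior_Icc] at hx
      have hx' : x ∈ Icc (0:ℝ) T := Ioo_subset_Icc_self hx
      have hD : HasDerivAt (fun s => ψ s - L * s) (φ x - L * 1) x :=
        (hd x hx').sub ((hasDerivAt_id x).const_mul L)
      rw [hD.deriv]
      have := hφ x hx'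
      linarith
  have h0T : (0:ℝ) ∈ Icc (0:ℝ) T := ⟨le_rfl, ht.1.trans ht.2⟩
  have := hanti h0T ht ht.1
  simp only [mul_zero, sub_zero] at this
  linarith

/-- Global existence and nonpositivity for the (extended) Riccati equation. -/
lemma riccati_aux_exists (T : ℝ) (hT : 0 < T) (r : ℝ) (hr : 0 ≤ r)
    (p q l : ℝ → ℝ) (hp : Continuous p) (hq : Continuous q) (hl : Continuous l)
    (P Q L : ℝ)
    (hpb : ∀ t, 0 ≤ p t ∧ p t ≤ P) (hqb : ∀ t, |q t| ≤ Q)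
    (hlb : ∀ t, 0 ≤ l t ∧ l t ≤ L) :
    ∃ α : ℝ → ℝ, α 0 = -r ∧
      (∀ t ∈ Icc (0:ℝ) T, HasDerivAt α (p t * α t ^ 2 + q t * α t - l t) t) ∧
      (∀ t ∈ Icc (0:ℝ) T, α t ≤ 0) := by
  have hP0 : 0 ≤ P := (hpb 0).1.trans (hpb 0).2
  have hQ0 : 0 ≤ Q := (abs_nonneg _).trans (hqb 0)
  have hL0 : 0 ≤ L := (hlb 0).1.trans (hlb 0).2
  set M : ℝ := (r + L * T) * Real.exp (Q * T) + 1 with hMdef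
  have hrLT : 0 ≤ r + L * T := by positivity
  have hM1 : 1 ≤ M := by
    have : 0 ≤ (r + L * T) * Real.exp (Q * T) := by positivity
    linarith
  have hM0 : 0 ≤ M := by linarith
  set clamp : ℝ → ℝ := fun x => max (-M) (min x 0) with hclampdef
  have hc_le0 : ∀ x, clamp x ≤ 0 := fun x => max_le (by linarith) (min_le_right _ _)
  have hc_geM : ∀ x, -M ≤ clamp x := fun x => le_max_left _ _
  have hc_abs : ∀ x, |clamp x| ≤ M := fun x => abs_le.mpr ⟨hc_geM x, (hc_le0 x).trans hM0⟩
  have hc_lip : ∀ x y, |clamp x - clamp y| ≤ |x - y| := by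
    intro x y
    have h1 : |clamp x - clamp y| ≤ |min x 0 - min y 0| := by
      simp only [hclampdef, max_comm (-M)]
      exact abs_max_sub_max_le_abs _ _ _
    refine h1.trans ?_
    have := abs_min_sub_min_le_max x 0 y 0
    simpa using this
  have hc_pos : ∀ x, 0 ≤ x → clamp x = 0 := by
    intro x hx
    simp only [hclampdef]
    rw [min_eq_right hx, max_eq_right (by linarith)]
  have hc_eq : ∀ x, -M ≤ x → x ≤ 0 → clamp x = x := by
    intro x h1 h2
    simp only [hclampdef]
    rw [min_eq_left h2, max_eq_right h1]
  have hc_ge_self : ∀ x, x ≤ 0 → x ≤ clamp x := by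
    intro x hx
    simp only [hclampdef]
    rw [min_eq_left hx]
    exact le_max_right _ _
  -- the truncated vector field
  set G : ℝ → ℝ → ℝ := fun t x => p t * clamp x ^ 2 + q t * clamp x - l t with hGdef
  have hGbound : ∀ t x, |G t x| ≤ P * M ^ 2 + Q * M + L := by
    intro t x
    have h1 : |p t * clamp x ^ 2| ≤ P * M ^ 2 := by
      rw [abs_mul, abs_of_nonneg (hpb t).1]
      have : |clamp x ^ 2| = |clamp x| ^ 2 := by rw [abs_pow, ← abs_abs (clamp x), abs_abs]
      rw [this]
      exact mul_le_mul (hpb t).2 (pow_le_pow_left₀ (abs_nonneg _) (hc_abs x) 2)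
        (by positivity) hP0
    have h2 : |q t * clamp x| ≤ Q * M := by
      rw [abs_mul]
      exact mul_le_mul (hqb t) (hc_abs x) (abs_nonneg _) hQ0
    have h3 : |l t| ≤ L := abs_le.mpr ⟨by linarith [(hlb t).1], (hlb t).2⟩
    calc |G t x| ≤ |p t * clamp x ^ 2 + q t * clamp x| + |l t| := abs_sub _ _
      _ ≤ |p t * clamp x ^ 2| + |q t * clamp x| + |l t| := by
          gcongr; exact abs_add_le _ _
      _ ≤ P * M ^ 2 + Q * M + L := by linarith
  set C : ℝ := P * M ^ 2 + Q * M + L with hCdef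
  have hC0 : 0 ≤ C := (abs_nonneg _).trans (hGbound 0 0)
  set R : ℝ := C * (T + 1) with hRdef
  have hR0 : 0 ≤ R := by positivity
  have hGlip : ∀ t, LipschitzWith (2 * P * M + Q).toNNReal (G t) := by
    intro t
    apply LipschitzWith.of_dist_le_mul
    intro x y
    rw [Real.coe_toNNReal _ (by positivity), Real.dist_eq, Real.dist_eq]
    have key : G t x - G t y
        = p t * ((clamp x + clamp y) * (clamp x - clamp y)) + q t * (clamp x - clamp y) := by
      simp only [hGdef]; ring
    rw [key]
    have h1 : |clamp x + clamp y| ≤ 2 * M := by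
      calc |clamp x + clamp y| ≤ |clamp x| + |clamp y| := abs_add_le _ _
        _ ≤ 2 * M := by linarith [hc_abs x, hc_abs y]
    have h2 : |clamp x - clamp y| ≤ |x - y| := hc_lip x y
    calc |p t * ((clamp x + clamp y) * (clamp x - clamp y)) + q t * (clamp x - clamp y)|
        ≤ |p t * ((clamp x + clamp y) * (clamp x - clamp y))| + |q t * (clamp x - clamp y)| :=
          abs_add_le _ _
      _ = |p t| * (|clamp x + clamp y| * |clamp x - clamp y|) + |q t| * |clamp x - clamp y| := by
          rw [abs_mul, abs_mul, abs_mul]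
      _ ≤ P * (2 * M * |x - y|) + Q * |x - y| := by
          have hpt : |p t| ≤ P := by rw [abs_of_nonneg (hpb t).1]; exact (hpb t).2
          have h3 : |clamp x + clamp y| * |clamp x - clamp y| ≤ 2 * M * |x - y| :=
            mul_le_mul h1 h2 (abs_nonneg _) (by positivity)
          have h4 : |p t| * (|clamp x + clamp y| * |clamp x - clamp y|)
              ≤ P * (2 * M * |x - y|) :=
            mul_le_mul hpt h3 (mul_nonneg (abs_nonneg _) (abs_nonneg _)) hP0
          have h5 : |q t| * |clamp x - clamp y| ≤ Q * |x - y| :=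
            mul_le_mul (hqb t) h2 (abs_nonneg _) hQ0
          linarith
      _ = (2 * P * M + Q) * |x - y| := by ring
  have hpl : IsPicardLindelof G (tmin := -1) (tmax := T + 1) ⟨0, by constructor <;> linarith⟩ (-r)
      R.toNNReal 0 C.toNNReal (2 * P * M + Q).toNNReal := by
    constructor
    · exact fun t _ => (hGlip t).lipschitzOnWith
    · intro x _
      exact ((hp.mul continuous_const).add ((hq.mul continuous_const)) |>.sub hl).continuousOn
    · intro t _ x _
      rw [Real.norm_eq_abs, Real.coe_toNNReal _ hC0]
      exact hGbound t x
    · have : max (T + 1 - 0) (0 - -1) = T + 1 := by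
        rw [max_eq_left (by linarith)]
        ring
      simp only [Real.coe_toNNReal _ hC0, Real.coe_toNNReal _ hR0, NNReal.coe_zero, sub_zero]
      exact mul_le_mul_of_nonneg_left (max_le (by linarith) (by linarith)) hC0
  obtain ⟨f, hf0', hfd⟩ := hpl.exists_eq_forall_mem_Icc_hasDerivWithinAt₀
  have hf0 : f 0 = -r := hf0'
  have hder : ∀ t ∈ Icc (0:ℝ) T, HasDerivAt f (G t (f t)) t := by
    intro t ht
    have h1 : t ∈ Icc (-1:ℝ) (T + 1) := ⟨by linarith [ht.1], by linarith [ht.2]⟩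
    exact (hfd t h1).hasDerivAt (Icc_mem_nhds (by linarith [ht.1]) (by linarith [ht.2]))
  -- nonpositivity
  have hnp : ∀ t ∈ Icc (0:ℝ) T, f t ≤ 0 := by
    apply riccati_aux_nonpos hder (by rw [hf0]; linarith)
    intro t ht hpos
    have : clamp (f t) = 0 := hc_pos _ hpos.le
    simp only [hGdef, this]
    have := (hlb t).1
    ring_nf
    simpa using this
  -- lower bound
  have hlow : ∀ t ∈ Icc (0:ℝ) T, -M < f t := by
    have hψd : ∀ t ∈ Icc (0:ℝ) T,
        HasDerivAt (fun s => -f s * Real.exp (-Q * s))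
          (Real.exp (-Q * t) * (Q * f t - G t (f t))) t := by
      intro t ht
      have h1 : HasDerivAt (fun s => Real.exp (-Q * s)) (Real.exp (-Q * t) * (-Q * 1)) t :=
        (((hasDerivAt_id t).const_mul (-Q))).exp
      have h2 : HasDerivAt (fun s => -f s * Real.exp (-Q * s)) _ t := ((hder t ht).neg).mul h1
      convert h2 using 1
      rw [Pi.neg_apply]
      ring
    have hψb : ∀ t ∈ Icc (0:ℝ) T, Real.exp (-Q * t) * (Q * f t - G t (f t)) ≤ L := by
      intro t ht
      have hft : f t ≤ 0 := hnp t ht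
      have hcf : f t ≤ clamp (f t) := hc_ge_self _ hft
      have hcf0 : clamp (f t) ≤ 0 := hc_le0 _
      have hqc : -(q t * clamp (f t)) ≤ Q * (-f t) := by
        have h1 : |q t * clamp (f t)| ≤ Q * (-clamp (f t)) := by
          rw [abs_mul, abs_of_nonpos hcf0]
          exact mul_le_mul_of_nonneg_right (hqb t) (by linarith)
        have h2 : -(q t * clamp (f t)) ≤ |q t * clamp (f t)| := neg_le_abs _
        have h3 : Q * (-clamp (f t)) ≤ Q * (-f t) := by
          apply mul_le_mul_of_nonneg_left _ hQ0
          linarith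
        linarith
      have hcore : Q * f t - G t (f t) ≤ L := by
        simp only [hGdef]
        have hpc : 0 ≤ p t * clamp (f t) ^ 2 := mul_nonneg (hpb t).1 (sq_nonneg _)
        have hlL := (hlb t).2
        nlinarith
      have hE1 : Real.exp (-Q * t) ≤ 1 := by
        rw [Real.exp_le_one_iff]
        have := ht.1
        nlinarith
      have hE0 : 0 < Real.exp (-Q * t) := Real.exp_pos _
      calc Real.exp (-Q * t) * (Q * f t - G t (f t))
          ≤ Real.exp (-Q * t) * L := mul_le_mul_of_nonneg_left hcore hE0.le
        _ ≤ 1 * L := mul_le_mul_of_nonneg_right hE1 hL0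
        _ = L := one_mul L
    have hψ := riccati_aux_linear hψd hψb
    intro t ht
    have h1 : -f t * Real.exp (-Q * t) ≤ -f 0 * Real.exp (-Q * 0) + L * t := hψ t ht
    have h2 : -f 0 * Real.exp (-Q * 0) = r := by
      rw [hf0]; simp
    rw [h2] at h1
    -- -f t ≤ (r + L t) e^{Q t} ≤ (r + L T) e^{Q T} = M - 1
    have hE : Real.exp (-Q * t) = (Real.exp (Q * t))⁻¹ := by
      rw [← Real.exp_neg]; ring_nf
    have hEpos : 0 < Real.exp (Q * t) := Real.exp_pos _
    have h3 : -f t ≤ (r + L * t) * Real.exp (Q * t) := by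
      rw [hE] at h1
      have h1' := mul_le_mul_of_nonneg_right h1 hEpos.le
      rw [mul_assoc, inv_mul_cancel₀ hEpos.ne', mul_one] at h1'
      exact h1'
    have h4 : (r + L * t) * Real.exp (Q * t) ≤ (r + L * T) * Real.exp (Q * T) := by
      have ht1 := ht.1
      have ht2 := ht.2
      apply mul_le_mul
      · nlinarith
      · exact Real.exp_le_exp.mpr (by nlinarith)
      · positivity
      · exact hrLT
    have : -f t ≤ M - 1 := by rw [hMdef]; linarith
    linarith
  refine ⟨f, hf0, ?_, hnp⟩
  intro t ht
  have hceq : clamp (f t) = f t := hc_eq _ (hlow t ht).le (hnp t ht)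
  have := hder t ht
  simpa only [hGdef, hceq] using this

/-- Uniqueness for the Riccati equation with globally bounded coefficients. -/
lemma riccati_aux_uniq (T : ℝ) (hT : 0 < T)
    (p q l : ℝ → ℝ) (P Q : ℝ)
    (hpb : ∀ t, |p t| ≤ P) (hqb : ∀ t, |q t| ≤ Q)
    (α β : ℝ → ℝ) (h0 : α 0 = β 0)
    (hα : ∀ t ∈ Icc (0:ℝ) T, HasDerivAt α (p t * α t ^ 2 + q t * α t - l t) t)
    (hβ : ∀ t ∈ Icc (0:ℝ) T, HasDerivAt β (p t * β t ^ 2 + q t * β t - l t) t) :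
    EqOn α β (Icc 0 T) := by
  have hP0 : 0 ≤ P := (abs_nonneg _).trans (hpb 0)
  have hQ0 : 0 ≤ Q := (abs_nonneg _).trans (hqb 0)
  have hcα : ContinuousOn α (Icc 0 T) := fun s hs =>
    ((hα s hs).continuousAt).continuousWithinAt
  have hcβ : ContinuousOn β (Icc 0 T) := fun s hs =>
    ((hβ s hs).continuousAt).continuousWithinAt
  obtain ⟨Kα, hKα⟩ := isCompact_Icc.exists_bound_of_continuousOn hcα
  obtain ⟨Kβ, hKβ⟩ := isCompact_Icc.exists_bound_of_continuousOn hcβ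
  set K : ℝ := max Kα Kβ with hKdef
  have h0m : (0:ℝ) ∈ Icc (0:ℝ) T := ⟨le_rfl, hT.le⟩
  have hK0 : 0 ≤ K := (norm_nonneg (α 0)).trans ((hKα 0 h0m).trans (le_max_left _ _))
  have hαK : ∀ t ∈ Icc (0:ℝ) T, α t ∈ Metric.closedBall (0:ℝ) K := by
    intro t ht
    rw [Metric.mem_closedBall, Real.dist_eq, sub_zero]
    exact (hKα t ht).trans (le_max_left _ _)
  have hβK : ∀ t ∈ Icc (0:ℝ) T, β t ∈ Metric.closedBall (0:ℝ) K := by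
    intro t ht
    rw [Metric.mem_closedBall, Real.dist_eq, sub_zero]
    exact (hKβ t ht).trans (le_max_right _ _)
  set v : ℝ → ℝ → ℝ := fun t x => p t * x ^ 2 + q t * x - l t with hvdef
  have hv : ∀ t, LipschitzOnWith (2 * P * K + Q).toNNReal (v t)
      (Metric.closedBall (0:ℝ) K) := by
    intro t
    rw [lipschitzOnWith_iff_dist_le_mul]
    intro x hx y hy
    rw [Metric.mem_closedBall, Real.dist_eq, sub_zero] at hx hy
    rw [Real.coe_toNNReal _ (by positivity), Real.dist_eq, Real.dist_eq]
    have key : v t x - v t y = (p t * (x + y) + q t) * (x - y) := by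
      simp only [hvdef]; ring
    rw [key, abs_mul]
    apply mul_le_mul_of_nonneg_right _ (abs_nonneg _)
    calc |p t * (x + y) + q t| ≤ |p t * (x + y)| + |q t| := abs_add_le _ _
      _ = |p t| * |x + y| + |q t| := by rw [abs_mul]
      _ ≤ P * (2 * K) + Q := by
          have h1 : |x + y| ≤ 2 * K := by
            calc |x + y| ≤ |x| + |y| := abs_add_le _ _
              _ ≤ 2 * K := by linarith
          gcongr
          exact hpb t
          exact hqb t
      _ = 2 * P * K + Q := by ring
  exact ODE_solution_unique_of_mem_Icc_right (v := v) (fun t _ => hv t) hcα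
    (fun t ht => (hα t (Ico_subset_Icc_self ht)).hasDerivWithinAt)
    (fun t ht => hαK t (Ico_subset_Icc_self ht)) hcβ
    (fun t ht => (hβ t (Ico_subset_Icc_self ht)).hasDerivWithinAt)
    (fun t ht => hβK t (Ico_subset_Icc_self ht)) h0

theorem riccati_global_existence_nonpos (T : ℝ) (hT : 0 < T) (r₁ r₂ : ℝ)
    (hr₁ : 0 ≤ r₁) (hr₂ : 0 ≤ r₂)
    (a f₂ l₁ l₂ m₁ b₁ : ℝ → ℝ)
    (ha : ContinuousOn a (Icc 0 T)) (hf₂ : ContinuousOn f₂ (Icc 0 T))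
    (hl₁c : ContinuousOn l₁ (Icc 0 T)) (hl₂c : ContinuousOn l₂ (Icc 0 T))
    (hm₁c : ContinuousOn m₁ (Icc 0 T)) (hb₁c : ContinuousOn b₁ (Icc 0 T))
    (haB : ∃ C, ∀ t ∈ Icc (0:ℝ) T, |a t| ≤ C)
    (hf₂B : ∃ C, ∀ t ∈ Icc (0:ℝ) T, |f₂ t| ≤ C)
    (hl₁B : ∃ C, ∀ t ∈ Icc (0:ℝ) T, |l₁ t| ≤ C)
    (hl₂B : ∃ C, ∀ t ∈ Icc (0:ℝ) T, |l₂ t| ≤ C)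
    (hb₁B : ∃ C, ∀ t ∈ Icc (0:ℝ) T, |b₁ t| ≤ C)
    (hl₁ : ∀ t ∈ Icc (0:ℝ) T, 0 ≤ l₁ t) (hl₂ : ∀ t ∈ Icc (0:ℝ) T, 0 ≤ l₂ t)
    (hm₁ : ∀ t ∈ Icc (0:ℝ) T, 0 < m₁ t) :
    (∃ α : ℝ → ℝ, ContinuousOn α (Icc 0 T) ∧ α 0 = -(r₁ + r₂) ∧
      (∀ t ∈ Icc (0:ℝ) T, HasDerivAt α
        (b₁ t ^ 2 / m₁ t * α t ^ 2 + (2 * a t + f₂ t ^ 2) * α t - (l₁ t + l₂ t)) t) ∧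
      (∀ t ∈ Icc (0:ℝ) T, α t ≤ 0))
    ∧ (∀ α α' : ℝ → ℝ,
        (α 0 = -(r₁ + r₂) ∧ ∀ t ∈ Icc (0:ℝ) T, HasDerivAt α
          (b₁ t ^ 2 / m₁ t * α t ^ 2 + (2 * a t + f₂ t ^ 2) * α t - (l₁ t + l₂ t)) t) →
        (α' 0 = -(r₁ + r₂) ∧ ∀ t ∈ Icc (0:ℝ) T, HasDerivAt α'
          (b₁ t ^ 2 / m₁ t * α' t ^ 2 + (2 * a t + f₂ t ^ 2) * α' t - (l₁ t + l₂ t)) t) →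
        EqOn α α' (Icc 0 T)) := by
  obtain ⟨Ca, hCa⟩ := haB
  obtain ⟨Cf, hCf⟩ := hf₂B
  obtain ⟨Cl1, hCl1⟩ := hl₁B
  obtain ⟨Cl2, hCl2⟩ := hl₂B
  obtain ⟨Cb, hCb⟩ := hb₁B
  have h0m : (0:ℝ) ∈ Icc (0:ℝ) T := ⟨le_rfl, hT.le⟩
  have hCa0 : 0 ≤ Ca := (abs_nonneg _).trans (hCa 0 h0m)
  have hCf0 : 0 ≤ Cf := (abs_nonneg _).trans (hCf 0 h0m)
  have hCl10 : 0 ≤ Cl1 := (abs_nonneg _).trans (hCl1 0 h0m)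
  have hCl20 : 0 ≤ Cl2 := (abs_nonneg _).trans (hCl2 0 h0m)
  have hCb0 : 0 ≤ Cb := (abs_nonneg _).trans (hCb 0 h0m)
  -- minimum of m₁
  obtain ⟨tm, htm, hmin⟩ := isCompact_Icc.exists_isMinOn ⟨0, h0m⟩ hm₁c
  set ε : ℝ := m₁ tm with hεdef
  have hε0 : 0 < ε := hm₁ tm htm
  have hεle : ∀ t ∈ Icc (0:ℝ) T, ε ≤ m₁ t := fun t ht => hmin ht
  -- projection-extended coefficients
  set e : ℝ → ℝ := fun t => ((projIcc (0:ℝ) T hT.le t : Icc (0:ℝ) T) : ℝ) with hedef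
  have he_mem : ∀ t, e t ∈ Icc (0:ℝ) T := fun t => (projIcc (0:ℝ) T hT.le t).2
  have he_eq : ∀ t ∈ Icc (0:ℝ) T, e t = t := by
    intro t ht
    simp only [hedef, projIcc_of_mem hT.le ht]
  have he_cont : Continuous e := continuous_subtype_val.comp (continuous_projIcc)
  set p : ℝ → ℝ := fun t => b₁ (e t) ^ 2 / m₁ (e t) with hpdef
  set q : ℝ → ℝ := fun t => 2 * a (e t) + f₂ (e t) ^ 2 with hqdef
  set l : ℝ → ℝ := fun t => l₁ (e t) + l₂ (e t) with hldef
  have hp_cont : Continuous p := by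
    have h1 : ContinuousOn (fun s => b₁ s ^ 2 / m₁ s) (Icc 0 T) :=
      (hb₁c.pow 2).div hm₁c (fun t ht => (hm₁ t ht).ne')
    exact h1.comp_continuous he_cont he_mem
  have hq_cont : Continuous q := by
    have h1 : ContinuousOn (fun s => 2 * a s + f₂ s ^ 2) (Icc 0 T) :=
      (continuousOn_const.mul ha).add (hf₂.pow 2)
    exact h1.comp_continuous he_cont he_mem
  have hl_cont : Continuous l := by
    have h1 : ContinuousOn (fun s => l₁ s + l₂ s) (Icc 0 T) := hl₁c.add hl₂c
    exact h1.comp_continuous he_cont he_mem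
  have hpb : ∀ t, 0 ≤ p t ∧ p t ≤ Cb ^ 2 / ε := by
    intro t
    have hm := hm₁ _ (he_mem t)
    constructor
    · exact div_nonneg (sq_nonneg _) hm.le
    · apply div_le_div₀ (by positivity) _ hε0 (hεle _ (he_mem t))
      calc b₁ (e t) ^ 2 = |b₁ (e t)| ^ 2 := (sq_abs _).symm
        _ ≤ Cb ^ 2 := pow_le_pow_left₀ (abs_nonneg _) (hCb _ (he_mem t)) 2
  have hqb : ∀ t, |q t| ≤ 2 * Ca + Cf ^ 2 := by
    intro t
    calc |q t| ≤ |2 * a (e t)| + |f₂ (e t) ^ 2| := abs_add_le _ _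
      _ = 2 * |a (e t)| + |f₂ (e t)| ^ 2 := by
          rw [abs_mul, abs_pow]
          norm_num
      _ ≤ 2 * Ca + Cf ^ 2 := by
          have h1 := hCa _ (he_mem t)
          have h2 := pow_le_pow_left₀ (abs_nonneg _) (hCf _ (he_mem t)) 2
          linarith
  have hlb : ∀ t, 0 ≤ l t ∧ l t ≤ Cl1 + Cl2 := by
    intro t
    have hlt : l t = l₁ (e t) + l₂ (e t) := rfl
    rw [hlt]
    constructor
    · exact add_nonneg (hl₁ _ (he_mem t)) (hl₂ _ (he_mem t))
    · have h1 := le_of_abs_le (hCl1 _ (he_mem t))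
      have h2 := le_of_abs_le (hCl2 _ (he_mem t))
      linarith
  have hrw : ∀ t ∈ Icc (0:ℝ) T, ∀ x : ℝ,
      p t * x ^ 2 + q t * x - l t
        = b₁ t ^ 2 / m₁ t * x ^ 2 + (2 * a t + f₂ t ^ 2) * x - (l₁ t + l₂ t) := by
    intro t ht x
    simp only [hpdef, hqdef, hldef, he_eq t ht]
  constructor
  · -- existence
    obtain ⟨f, hf0, hfd, hfnp⟩ := riccati_aux_exists T hT (r₁ + r₂) (by linarith)
      p q l hp_cont hq_cont hl_cont (Cb ^ 2 / ε) (2 * Ca + Cf ^ 2) (Cl1 + Cl2) hpb hqb hlb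
    refine ⟨f, ?_, hf0, ?_, hfnp⟩
    · intro s hs
      exact ((hfd s hs).continuousAt).continuousWithinAt
    · intro t ht
      have := hfd t ht
      rwa [hrw t ht (f t)] at this
  · -- uniqueness
    intro α β hA hB
    have hA' : ∀ t ∈ Icc (0:ℝ) T, HasDerivAt α (p t * α t ^ 2 + q t * α t - l t) t := by
      intro t ht
      rw [hrw t ht (α t)]
      exact hA.2 t ht
    have hB' : ∀ t ∈ Icc (0:ℝ) T, HasDerivAt β (p t * β t ^ 2 + q t * β t - l t) t := by
      intro t ht
      rw [hrw t ht (β t)]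
      exact hB.2 t ht
    have hpb' : ∀ t, |p t| ≤ Cb ^ 2 / ε := fun t =>
      abs_le.mpr ⟨by linarith [(hpb t).1, (hpb t).2, div_nonneg (sq_nonneg Cb) hε0.le], (hpb t).2⟩
    exact riccati_aux_uniq T hT p q l (Cb ^ 2 / ε) (2 * Ca + Cf ^ 2) hpb' hqb
      α β (by rw [hA.1, hB.1]) hA' hB'
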